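/- Let H be a Hopf k-algebra, (M, Δ_M) a right H-comodule, and (P, θ_P) a left H-contramodule which is projective in the sense that there is an H-contramodule homomorphism σ : P → Hom_k(H,P) (with the free contra-action on Hom_k(H,P)) satisfying θ_P ∘ σ = id_P. Then the contramodule (Hom_k(M,P), θ_diag), where θ_diag(Φ)(m) = θ_P(h ↦ Φ(m₍₁₎h)(m₍₀₎)), is a retract of a free H-contramodule: there exist a k-vector space W and H-contramodule homomorphisms s : Hom_k(M,P) → Hom_k(H,W) and p : Hom_k(H,W) → Hom_k(M,P), with the free contra-action on Hom_k(H,W), such that p ∘ s = id. -/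

import Mathlib

/-!
STATEMENT 10: If (P, θ_P) is a projective left H-contramodule (its contra-action splits by a
contramodule map σ : P → Hom_k(H,P)), then for any right H-comodule M the diagonal
contramodule (Hom_k(M,P), θ_diag) is a retract of a free H-contramodule.
-/

open TensorProduct LinearMap

noncomputable section

universe u v w x

variable (k : Type u) [Field k]
variable (H : Type v) [Semiring H] [HopfAlgebra k H]

def IsComodule {M : Type*} [AddCommGroup M] [Module k M]
    (ρ : M →ₗ[k] M ⊗[k] H) : Prop :=
  ((TensorProduct.assoc k M H H).toLinearMap ∘ₗ (TensorProduct.map ρ LinearMap.id) ∘ₗ ρ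
      = (TensorProduct.map LinearMap.id Coalgebra.comul) ∘ₗ ρ) ∧
  ((TensorProduct.rid k M).toLinearMap ∘ₗ
      (TensorProduct.map LinearMap.id Coalgebra.counit) ∘ₗ ρ = LinearMap.id)

def IsContramodule {B : Type*} [AddCommGroup B] [Module k B]
    (θ : (H →ₗ[k] B) →ₗ[k] B) : Prop :=
  (∀ Φ : H →ₗ[k] (H →ₗ[k] B),
      θ (θ ∘ₗ Φ) = θ ((TensorProduct.lift Φ.flip) ∘ₗ Coalgebra.comul)) ∧
  (∀ b : B, θ ((LinearMap.toSpanSingleton k B b) ∘ₗ Coalgebra.counit) = b)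

def IsContraHom {B D : Type*} [AddCommGroup B] [Module k B] [AddCommGroup D] [Module k D]
    (θB : (H →ₗ[k] B) →ₗ[k] B) (θD : (H →ₗ[k] D) →ₗ[k] D)
    (f : B →ₗ[k] D) : Prop :=
  ∀ φ : H →ₗ[k] B, f (θB φ) = θD (f ∘ₗ φ)

/-- The free contra-action on `Hom_k(H,V)`: `θ_free(Φ)(h) = Φ(h₍₂₎)(h₍₁₎)`. -/
def freeContra (V : Type*) [AddCommGroup V] [Module k V] :
    (H →ₗ[k] (H →ₗ[k] V)) →ₗ[k] (H →ₗ[k] V) :=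
  (LinearMap.lcomp k V (Coalgebra.comul (R := k) (A := H))) ∘ₗ
    (TensorProduct.uncurry (RingHom.id k) H H V) ∘ₗ (LinearMap.lflip.toLinearMap)

/-- The diagonal contra-action `θ_diag(Φ)(m) = θ_B(h ↦ Φ(m₍₁₎h)(m₍₀₎))` on `Hom_k(M,B)`. -/
def diagContra {M : Type*} [AddCommGroup M] [Module k M]
    {B : Type*} [AddCommGroup B] [Module k B]
    (ρ : M →ₗ[k] M ⊗[k] H) (θB : (H →ₗ[k] B) →ₗ[k] B) :
    (H →ₗ[k] (M →ₗ[k] B)) →ₗ[k] (M →ₗ[k] B) :=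
  (LinearMap.llcomp k M (H →ₗ[k] B) B θB) ∘ₗ
  (LinearMap.lcomp k (H →ₗ[k] B) ρ) ∘ₗ
  (TensorProduct.uncurry (RingHom.id k) M H (H →ₗ[k] B)) ∘ₗ
  (LinearMap.lflip.toLinearMap) ∘ₗ
  (LinearMap.llcomp k H (H →ₗ[k] (M →ₗ[k] B)) (M →ₗ[k] (H →ₗ[k] B)) LinearMap.lflip.toLinearMap) ∘ₗ
  (TensorProduct.lcurry (RingHom.id k) H H (M →ₗ[k] B)) ∘ₗ
  (LinearMap.lcomp k (M →ₗ[k] B) (LinearMap.mul' k H))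

open Coalgebra

lemma freeContra_apply (V : Type*) [AddCommGroup V] [Module k V]
    (Φ : H →ₗ[k] (H →ₗ[k] V)) (h : H) {ι : Type*} (r : Coalgebra.Repr k h ι) :
    freeContra k H V Φ h = ∑ i ∈ r.index, Φ (r.right i) (r.left i) := by
  simp only [freeContra, LinearMap.comp_apply, LinearMap.lcomp_apply, ← r.eq, map_sum]
  simp

lemma diagContra_apply {M : Type*} [AddCommGroup M] [Module k M]
    {B : Type*} [AddCommGroup B] [Module k B]
    (ρ : M →ₗ[k] M ⊗[k] H) (θB : (H →ₗ[k] B) →ₗ[k] B)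
    (Φ : H →ₗ[k] (M →ₗ[k] B)) (m : M) {ι : Type*} (t : Finset ι)
    (f : ι → M) (g : ι → H) (hrep : ∑ i ∈ t, f i ⊗ₜ[k] g i = ρ m) :
    diagContra k H ρ θB Φ m
      = θB (∑ i ∈ t, (Φ ∘ₗ LinearMap.mulLeft k (g i)).flip (f i)) := by
  simp only [diagContra, LinearMap.comp_apply, LinearMap.llcomp_apply, LinearMap.lcomp_apply]
  congr 1
  rw [← hrep, map_sum]
  ext b
  simp [LinearMap.mul'_apply]

section Conv
variable {C : Type*} [Semiring C] [Algebra k C]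

def conv (f g : H →ₗ[k] C) : H →ₗ[k] C :=
  (LinearMap.mul' k C) ∘ₗ (TensorProduct.map f g) ∘ₗ Coalgebra.comul

def cunit : H →ₗ[k] C := (Algebra.linearMap k C) ∘ₗ Coalgebra.counit

variable {k H}

lemma conv_apply (f g : H →ₗ[k] C) (a : H) {ι : Type*} (r : Coalgebra.Repr k a ι) :
    conv k H f g a = ∑ i ∈ r.index, f (r.left i) * g (r.right i) := by
  simp only [conv, LinearMap.comp_apply, ← r.eq, map_sum]
  simp [LinearMap.mul'_apply]

lemma repr_counit_smul_left (a : H) {ι : Type*} (r : Coalgebra.Repr k a ι) :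
    ∑ i ∈ r.index, Coalgebra.counit (R := k) (r.left i) • r.right i = a := by
  have := Coalgebra.sum_counit_tmul_eq r
  apply_fun (TensorProduct.lid k H) at this
  simp only [map_sum, TensorProduct.lid_tmul] at this
  simpa using this

lemma repr_counit_smul_right (a : H) {ι : Type*} (r : Coalgebra.Repr k a ι) :
    ∑ i ∈ r.index, Coalgebra.counit (R := k) (r.right i) • r.left i = a := by
  have := Coalgebra.sum_tmul_counit_eq r
  apply_fun (TensorProduct.rid k H) at this
  simp only [map_sum, TensorProduct.rid_tmul] at this
  simpa using this

lemma cunit_conv (f : H →ₗ[k] C) : conv k H (cunit k H) f = f := by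
  ext a
  obtain r := Coalgebra.Repr.arbitrary k a
  rw [conv_apply _ _ _ r]
  simp only [cunit, LinearMap.comp_apply, Algebra.linearMap_apply]
  calc ∑ i ∈ r.index, algebraMap k C (counit (r.left i)) * f (r.right i)
      = ∑ i ∈ r.index, counit (R:=k) (r.left i) • f (r.right i) := by
        simp only [Algebra.smul_def]
    _ = f (∑ i ∈ r.index, counit (R:=k) (r.left i) • r.right i) := by
        simp only [map_sum, map_smul]
    _ = f a := by rw [repr_counit_smul_left a r]

lemma conv_cunit (f : H →ₗ[k] C) : conv k H f (cunit k H) = f := by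
  ext a
  obtain r := Coalgebra.Repr.arbitrary k a
  rw [conv_apply _ _ _ r]
  simp only [cunit, LinearMap.comp_apply, Algebra.linearMap_apply]
  calc ∑ i ∈ r.index, f (r.left i) * algebraMap k C (counit (r.right i))
      = ∑ i ∈ r.index, counit (R:=k) (r.right i) • f (r.left i) := by
        simp only [Algebra.smul_def]
        exact Finset.sum_congr rfl fun i _ => (Algebra.commutes _ _).symm
    _ = f (∑ i ∈ r.index, counit (R:=k) (r.right i) • r.left i) := by
        simp only [map_sum, map_smul]
    _ = f a := by rw [repr_counit_smul_right a r]

lemma conv_assoc (f g h : H →ₗ[k] C) :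
    conv k H (conv k H f g) h = conv k H f (conv k H g h) := by
  ext a
  obtain r := Coalgebra.Repr.arbitrary k a
  have key := Coalgebra.sum_tmul_tmul_eq r (fun i => Coalgebra.Repr.arbitrary k (r.left i))
    (fun i => Coalgebra.Repr.arbitrary k (r.right i))
  set T : H ⊗[k] (H ⊗[k] H) →ₗ[k] C :=
    (LinearMap.mul' k C) ∘ₗ (TensorProduct.map f ((LinearMap.mul' k C) ∘ₗ TensorProduct.map g h))
  have := congrArg T key
  simp only [map_sum] at this
  rw [conv_apply _ _ _ r, conv_apply _ _ _ r]
  calc ∑ i ∈ r.index, conv k H f g (r.left i) * h (r.right i)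
      = ∑ i ∈ r.index, ∑ j ∈ (Coalgebra.Repr.arbitrary k (r.left i)).index,
          f ((Coalgebra.Repr.arbitrary k (r.left i)).left j) *
            g ((Coalgebra.Repr.arbitrary k (r.left i)).right j) * h (r.right i) := by
        refine Finset.sum_congr rfl fun i _ => ?_
        rw [conv_apply _ _ _ (Coalgebra.Repr.arbitrary k (r.left i)), Finset.sum_mul]
    _ = ∑ i ∈ r.index, ∑ j ∈ (Coalgebra.Repr.arbitrary k (r.right i)).index,
          f (r.left i) * (g ((Coalgebra.Repr.arbitrary k (r.right i)).left j) *
            h ((Coalgebra.Repr.arbitrary k (r.right i)).right j)) := by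
        simpa [T, LinearMap.mul'_apply, mul_assoc] using this
    _ = ∑ i ∈ r.index, f (r.left i) * conv k H g h (r.right i) := by
        refine Finset.sum_congr rfl fun i _ => ?_
        rw [conv_apply _ _ _ (Coalgebra.Repr.arbitrary k (r.right i)), Finset.mul_sum]

end Conv

section AntiComul

/-- `a ↦ ∑ S(a₍₂₎) ⊗ S(a₍₁₎)`. -/
def antiComul : H →ₗ[k] H ⊗[k] H :=
  (TensorProduct.map (HopfAlgebra.antipode (R := k)) (HopfAlgebra.antipode (R := k))) ∘ₗ
    (TensorProduct.comm k H H).toLinearMap ∘ₗ Coalgebra.comul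

variable {k H}

lemma antiComul_apply (a : H) {ι : Type*} (r : Coalgebra.Repr k a ι) :
    antiComul k H a = ∑ i ∈ r.index,
      HopfAlgebra.antipode (R := k) (r.right i) ⊗ₜ[k] HopfAlgebra.antipode (R := k) (r.left i) := by
  simp only [antiComul, LinearMap.comp_apply, LinearEquiv.coe_coe, ← r.eq, map_sum]
  simp

lemma conv_comul_comulAntipode :
    conv k H Coalgebra.comul (Coalgebra.comul ∘ₗ HopfAlgebra.antipode (R := k)) = cunit k H := by
  ext a
  obtain r := Coalgebra.Repr.arbitrary k a
  rw [conv_apply _ _ _ r]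
  calc ∑ i ∈ r.index, Coalgebra.comul (R := k) (r.left i) *
          (Coalgebra.comul ∘ₗ HopfAlgebra.antipode (R := k)) (r.right i)
      = ∑ i ∈ r.index, Coalgebra.comul (R := k)
          (r.left i * HopfAlgebra.antipode (R := k) (r.right i)) := by
        simp [Bialgebra.comul_mul]
    _ = Coalgebra.comul (R := k)
          (∑ i ∈ r.index, r.left i * HopfAlgebra.antipode (R := k) (r.right i)) := by
        rw [map_sum]
    _ = cunit k H a := by
        rw [HopfAlgebra.sum_mul_antipode_eq_smul r]
        simp [cunit, Algebra.algebraMap_eq_smul_one]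

lemma conv_antiComul_comul :
    conv k H (antiComul k H) Coalgebra.comul = cunit k H := by
  ext a
  set S : H →ₗ[k] H := HopfAlgebra.antipode (R := k) with hS
  obtain r := Coalgebra.Repr.arbitrary k a
  set rl : ∀ i, Coalgebra.Repr k (r.left i) (H × H) := fun i => Coalgebra.Repr.arbitrary k (r.left i)
    with hrl
  set rr : ∀ i, Coalgebra.Repr k (r.right i) (H × H) := fun i => Coalgebra.Repr.arbitrary k (r.right i)
    with hrr
  set p : ∀ i j, Coalgebra.Repr k ((rr i).left j) (H × H) :=
    fun i j => Coalgebra.Repr.arbitrary k ((rr i).left j) with hp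
  set q : ∀ i j, Coalgebra.Repr k ((rr i).right j) (H × H) :=
    fun i j => Coalgebra.Repr.arbitrary k ((rr i).right j) with hq
  -- the map F : x ⊗ (y ⊗ z) ↦ (S y ⊗ S x) * Δ z
  set F : H ⊗[k] (H ⊗[k] H) →ₗ[k] H ⊗[k] H :=
    (LinearMap.mul' k (H ⊗[k] H)) ∘ₗ
      (TensorProduct.map ((TensorProduct.map S S) ∘ₗ (TensorProduct.comm k H H).toLinearMap)
        (Coalgebra.comul)) ∘ₗ (TensorProduct.assoc k H H H).symm.toLinearMap with hF
  have hFapp : ∀ (x y z : H), F (x ⊗ₜ[k] (y ⊗ₜ[k] z)) = (S y ⊗ₜ[k] S x) * Coalgebra.comul z := by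
    intro x y z
    simp [hF, LinearMap.mul'_apply]
  have key1 := Coalgebra.sum_tmul_tmul_eq r rl rr
  have step1 : conv k H (antiComul k H) Coalgebra.comul a =
      ∑ i ∈ r.index, ∑ j ∈ (rr i).index,
        (S ((rr i).left j) ⊗ₜ[k] S (r.left i)) * Coalgebra.comul (R := k) ((rr i).right j) := by
    rw [conv_apply _ _ _ r]
    have hL : ∀ i, antiComul k H (r.left i) * Coalgebra.comul (R := k) (r.right i)
        = ∑ j ∈ (rl i).index, F ((rl i).left j ⊗ₜ[k] ((rl i).right j ⊗ₜ[k] r.right i)) := by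
      intro i
      rw [antiComul_apply _ (rl i), Finset.sum_mul]
      exact Finset.sum_congr rfl fun j _ => by rw [hFapp]
    calc ∑ i ∈ r.index, antiComul k H (r.left i) * Coalgebra.comul (R := k) (r.right i)
        = ∑ i ∈ r.index, ∑ j ∈ (rl i).index,
            F ((rl i).left j ⊗ₜ[k] ((rl i).right j ⊗ₜ[k] r.right i)) := by
          exact Finset.sum_congr rfl fun i _ => hL i
      _ = F (∑ i ∈ r.index, ∑ j ∈ (rl i).index,
            (rl i).left j ⊗ₜ[k] ((rl i).right j ⊗ₜ[k] r.right i)) := by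
          simp only [map_sum]
      _ = F (∑ i ∈ r.index, ∑ j ∈ (rr i).index,
            r.left i ⊗ₜ[k] ((rr i).left j ⊗ₜ[k] (rr i).right j)) := by rw [key1]
      _ = ∑ i ∈ r.index, ∑ j ∈ (rr i).index,
            (S ((rr i).left j) ⊗ₜ[k] S (r.left i)) * Coalgebra.comul (R := k) ((rr i).right j) := by
          simp only [map_sum]
          exact Finset.sum_congr rfl fun i _ => Finset.sum_congr rfl fun j _ => hFapp _ _ _
  -- step 2 and 3: for each i, collapse the inner double sum
  have step2 : ∀ i, ∑ j ∈ (rr i).index,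
      (S ((rr i).left j) ⊗ₜ[k] S (r.left i)) * Coalgebra.comul (R := k) ((rr i).right j)
      = (1 : H) ⊗ₜ[k] (S (r.left i) * r.right i) := by
    intro i
    -- G : u ⊗ (v ⊗ w) ↦ S(u) * v ⊗ S(lᵢ) * w
    set G : H ⊗[k] (H ⊗[k] H) →ₗ[k] H ⊗[k] H :=
      (TensorProduct.map ((LinearMap.mul' k H) ∘ₗ (S.rTensor H))
        (LinearMap.mulLeft k (S (r.left i)))) ∘ₗ (TensorProduct.assoc k H H H).symm.toLinearMap
      with hG
    have hGapp : ∀ (u v w : H), G (u ⊗ₜ[k] (v ⊗ₜ[k] w)) = (S u * v) ⊗ₜ[k] (S (r.left i) * w) := by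
      intro u v w
      simp [hG, LinearMap.mul'_apply]
    have key2 := Coalgebra.sum_tmul_tmul_eq (rr i) (p i) (q i)
    calc ∑ j ∈ (rr i).index,
        (S ((rr i).left j) ⊗ₜ[k] S (r.left i)) * Coalgebra.comul (R := k) ((rr i).right j)
        = ∑ j ∈ (rr i).index, ∑ m ∈ (q i j).index,
            (S ((rr i).left j) * (q i j).left m) ⊗ₜ[k] (S (r.left i) * (q i j).right m) := by
          refine Finset.sum_congr rfl fun j _ => ?_
          rw [← (q i j).eq, Finset.mul_sum]
          exact Finset.sum_congr rfl fun m _ => Algebra.TensorProduct.tmul_mul_tmul _ _ _ _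
      _ = G (∑ j ∈ (rr i).index, ∑ m ∈ (q i j).index,
            (rr i).left j ⊗ₜ[k] ((q i j).left m ⊗ₜ[k] (q i j).right m)) := by
          simp only [map_sum]
          exact Finset.sum_congr rfl fun j _ => Finset.sum_congr rfl fun m _ => (hGapp _ _ _).symm
      _ = G (∑ j ∈ (rr i).index, ∑ m ∈ (p i j).index,
            (p i j).left m ⊗ₜ[k] ((p i j).right m ⊗ₜ[k] (rr i).right j)) := by rw [key2]
      _ = ∑ j ∈ (rr i).index, ∑ m ∈ (p i j).index,
            (S ((p i j).left m) * (p i j).right m) ⊗ₜ[k] (S (r.left i) * (rr i).right j) := by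
          simp only [map_sum]
          exact Finset.sum_congr rfl fun j _ => Finset.sum_congr rfl fun m _ => hGapp _ _ _
      _ = ∑ j ∈ (rr i).index,
            ((Coalgebra.counit (R := k) ((rr i).left j) • (1:H)) ⊗ₜ[k]
              (S (r.left i) * (rr i).right j)) := by
          refine Finset.sum_congr rfl fun j _ => ?_
          rw [← TensorProduct.sum_tmul]
          congr 1
          exact HopfAlgebra.sum_antipode_mul_eq_smul (p i j)
      _ = (1 : H) ⊗ₜ[k] (S (r.left i) *
            (∑ j ∈ (rr i).index, Coalgebra.counit (R := k) ((rr i).left j) • (rr i).right j)) := by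
          rw [Finset.mul_sum, TensorProduct.tmul_sum]
          refine Finset.sum_congr rfl fun j _ => ?_
          rw [TensorProduct.smul_tmul, mul_smul_comm]
      _ = (1 : H) ⊗ₜ[k] (S (r.left i) * r.right i) := by
          rw [repr_counit_smul_left _ (rr i)]
  rw [step1]
  calc ∑ i ∈ r.index, ∑ j ∈ (rr i).index,
        (S ((rr i).left j) ⊗ₜ[k] S (r.left i)) * Coalgebra.comul (R := k) ((rr i).right j)
      = ∑ i ∈ r.index, (1 : H) ⊗ₜ[k] (S (r.left i) * r.right i) := by
        exact Finset.sum_congr rfl fun i _ => step2 i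
    _ = (1 : H) ⊗ₜ[k] (∑ i ∈ r.index, S (r.left i) * r.right i) := by
        rw [TensorProduct.tmul_sum]
    _ = cunit k H a := by
        rw [HopfAlgebra.sum_antipode_mul_eq_smul r]
        simp [cunit, Algebra.algebraMap_eq_smul_one, TensorProduct.tmul_smul,
          Algebra.TensorProduct.one_def]

lemma comul_comp_antipode :
    Coalgebra.comul ∘ₗ HopfAlgebra.antipode (R := k) = antiComul k H := by
  calc Coalgebra.comul (R := k) ∘ₗ HopfAlgebra.antipode (R := k)
      = conv k H (cunit k H) (Coalgebra.comul ∘ₗ HopfAlgebra.antipode (R := k)) :=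
        (cunit_conv _).symm
    _ = conv k H (conv k H (antiComul k H) Coalgebra.comul)
          (Coalgebra.comul ∘ₗ HopfAlgebra.antipode (R := k)) := by rw [conv_antiComul_comul]
    _ = conv k H (antiComul k H)
          (conv k H Coalgebra.comul (Coalgebra.comul ∘ₗ HopfAlgebra.antipode (R := k))) :=
        conv_assoc _ _ _
    _ = conv k H (antiComul k H) (cunit k H) := by rw [conv_comul_comulAntipode]
    _ = antiComul k H := conv_cunit _

end AntiComul

section ReprHelpers
variable {k H}

/-- A representation of `comul (x * y)` from representations of `comul x` and `comul y`. -/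
def mulRepr {ι₁ ι₂ : Type*} (x y : H) (r1 : Coalgebra.Repr k x ι₁) (r2 : Coalgebra.Repr k y ι₂) :
    Coalgebra.Repr k (x * y) (ι₁ × ι₂) where
  index := r1.index ×ˢ r2.index
  left := fun i => r1.left i.1 * r2.left i.2
  right := fun i => r1.right i.1 * r2.right i.2
  eq := by
    rw [Bialgebra.comul_mul, ← r1.eq, ← r2.eq, Finset.sum_mul_sum]
    rw [Finset.sum_product]
    exact Finset.sum_congr rfl fun i _ => Finset.sum_congr rfl fun j _ =>
      (Algebra.TensorProduct.tmul_mul_tmul _ _ _ _).symm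

/-- A representation of `comul (S x)` from a representation of `comul x`. -/
def antipodeRepr {ι : Type*} (x : H) (r : Coalgebra.Repr k x ι) :
    Coalgebra.Repr k (HopfAlgebra.antipode (R := k) x) ι where
  index := r.index
  left := fun i => HopfAlgebra.antipode (R := k) (r.right i)
  right := fun i => HopfAlgebra.antipode (R := k) (r.left i)
  eq := by
    have := congrArg (fun (f : H →ₗ[k] H ⊗[k] H) => f x) (comul_comp_antipode (k := k) (H := H))
    simp only [LinearMap.comp_apply] at this
    rw [this, antiComul_apply x r]

end ReprHelpers

section Comodule
variable {k H}
variable {M : Type w} [AddCommGroup M] [Module k M]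
variable (ρ : M →ₗ[k] M ⊗[k] H)

/-- Pure-H lemma: `∑ z₍₁₎ S(z₍₂₎) ⊗ z₍₃₎ = 1 ⊗ z`. -/
lemma H1 (z : H) :
    ((TensorProduct.map ((LinearMap.mul' k H) ∘ₗ
        ((HopfAlgebra.antipode (R := k)).lTensor H)) LinearMap.id) ∘ₗ
      (TensorProduct.assoc k H H H).symm.toLinearMap)
      ((Coalgebra.comul (R := k)).lTensor H (Coalgebra.comul (R := k) z)) = 1 ⊗ₜ[k] z := by
  set T := ((TensorProduct.map ((LinearMap.mul' k H) ∘ₗ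
        ((HopfAlgebra.antipode (R := k)).lTensor H)) LinearMap.id) ∘ₗ
      (TensorProduct.assoc k H H H).symm.toLinearMap) with hT
  have hTapp : ∀ (b x y : H), T (b ⊗ₜ[k] (x ⊗ₜ[k] y))
      = (b * HopfAlgebra.antipode (R := k) x) ⊗ₜ[k] y := by
    intro b x y; simp [hT, LinearMap.mul'_apply]
  obtain r := Coalgebra.Repr.arbitrary k z
  set rl : ∀ i, Coalgebra.Repr k (r.left i) (H × H) := fun i => Coalgebra.Repr.arbitrary k (r.left i)
  set rr : ∀ i, Coalgebra.Repr k (r.right i) (H × H) := fun i => Coalgebra.Repr.arbitrary k (r.right i)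
  have key := Coalgebra.sum_tmul_tmul_eq r rl rr
  have expand : (Coalgebra.comul (R := k)).lTensor H (Coalgebra.comul (R := k) z)
      = ∑ i ∈ r.index, ∑ j ∈ (rr i).index,
          r.left i ⊗ₜ[k] ((rr i).left j ⊗ₜ[k] (rr i).right j) := by
    rw [← r.eq, map_sum]
    refine Finset.sum_congr rfl fun i _ => ?_
    rw [LinearMap.lTensor_tmul, ← (rr i).eq, TensorProduct.tmul_sum]
  rw [expand, ← key, map_sum]
  calc ∑ i ∈ r.index, T (∑ j ∈ (rl i).index,
          (rl i).left j ⊗ₜ[k] ((rl i).right j ⊗ₜ[k] r.right i))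
      = ∑ i ∈ r.index, ∑ j ∈ (rl i).index,
          ((rl i).left j * HopfAlgebra.antipode (R := k) ((rl i).right j)) ⊗ₜ[k] r.right i := by
        refine Finset.sum_congr rfl fun i _ => ?_
        rw [map_sum]
        exact Finset.sum_congr rfl fun j _ => hTapp _ _ _
    _ = ∑ i ∈ r.index,
          (Coalgebra.counit (R := k) (r.left i) • (1:H)) ⊗ₜ[k] r.right i := by
        refine Finset.sum_congr rfl fun i _ => ?_
        rw [← TensorProduct.sum_tmul, HopfAlgebra.sum_mul_antipode_eq_smul (rl i)]
    _ = (1:H) ⊗ₜ[k] (∑ i ∈ r.index, Coalgebra.counit (R := k) (r.left i) • r.right i) := by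
        rw [TensorProduct.tmul_sum]
        exact Finset.sum_congr rfl fun i _ => by
          rw [TensorProduct.smul_tmul, TensorProduct.tmul_smul]
    _ = 1 ⊗ₜ[k] z := by rw [repr_counit_smul_left z r]

variable (hM : IsComodule k H ρ)
include hM

lemma comodule_counit_smul (m : M) (t : Finset (M × H))
    (ht : ρ m = ∑ p ∈ t, p.1 ⊗ₜ[k] p.2) :
    ∑ p ∈ t, Coalgebra.counit (R := k) p.2 • p.1 = m := by
  have := congrArg (fun (f : M →ₗ[k] M) => f m) hM.2
  simp only [LinearMap.comp_apply, LinearMap.id_apply, LinearEquiv.coe_coe] at this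
  rw [ht, map_sum, map_sum] at this
  simpa [TensorProduct.rid_tmul] using this

lemma comodule_coassoc (m : M) (t : Finset (M × H))
    (ht : ρ m = ∑ p ∈ t, p.1 ⊗ₜ[k] p.2)
    (u : (M × H) → Finset (M × H))
    (hu : ∀ p ∈ t, ρ p.1 = ∑ q ∈ u p, q.1 ⊗ₜ[k] q.2) :
    ∑ p ∈ t, ∑ q ∈ u p, q.1 ⊗ₜ[k] (q.2 ⊗ₜ[k] p.2)
      = ∑ p ∈ t, p.1 ⊗ₜ[k] Coalgebra.comul (R := k) p.2 := by
  have := congrArg (fun (f : M →ₗ[k] M ⊗[k] (H ⊗[k] H)) => f m) hM.1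
  simp only [LinearMap.comp_apply, LinearEquiv.coe_coe] at this
  rw [ht, map_sum, map_sum, map_sum] at this
  calc ∑ p ∈ t, ∑ q ∈ u p, q.1 ⊗ₜ[k] (q.2 ⊗ₜ[k] p.2)
      = ∑ p ∈ t, (TensorProduct.assoc k M H H)
          ((TensorProduct.map ρ LinearMap.id) (p.1 ⊗ₜ[k] p.2)) := by
        refine Finset.sum_congr rfl fun p hp => ?_
        rw [TensorProduct.map_tmul, LinearMap.id_apply, hu p hp, TensorProduct.sum_tmul, map_sum]
        exact Finset.sum_congr rfl fun q _ => by simp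
    _ = ∑ p ∈ t, (TensorProduct.map LinearMap.id Coalgebra.comul) (p.1 ⊗ₜ[k] p.2) := this
    _ = ∑ p ∈ t, p.1 ⊗ₜ[k] Coalgebra.comul (R := k) p.2 := by
        exact Finset.sum_congr rfl fun p _ => by simp

/-- `∑ m₍₀₎ ⊗ S(m₍₁₎) m₍₂₎ = m ⊗ 1`. -/
lemma comodule_antipode_cancel (m : M) (t : Finset (M × H))
    (ht : ρ m = ∑ p ∈ t, p.1 ⊗ₜ[k] p.2)
    (u : (M × H) → Finset (M × H))
    (hu : ∀ p ∈ t, ρ p.1 = ∑ q ∈ u p, q.1 ⊗ₜ[k] q.2) :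
    ∑ p ∈ t, ∑ q ∈ u p, q.1 ⊗ₜ[k] (HopfAlgebra.antipode (R := k) q.2 * p.2)
      = m ⊗ₜ[k] (1 : H) := by
  have A1 := comodule_coassoc ρ hM m t ht u hu
  have := congrArg (TensorProduct.map (LinearMap.id (R := k) (M := M))
    ((LinearMap.mul' k H) ∘ₗ ((HopfAlgebra.antipode (R := k)).rTensor H))) A1
  simp only [map_sum, TensorProduct.map_tmul, LinearMap.id_apply, LinearMap.comp_apply] at this
  calc ∑ p ∈ t, ∑ q ∈ u p, q.1 ⊗ₜ[k] (HopfAlgebra.antipode (R := k) q.2 * p.2)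
      = ∑ p ∈ t, p.1 ⊗ₜ[k]
          (LinearMap.mul' k H) (((HopfAlgebra.antipode (R := k)).rTensor H)
            (Coalgebra.comul (R := k) p.2)) := by
        refine Eq.trans ?_ this
        exact Finset.sum_congr rfl fun p _ => Finset.sum_congr rfl fun q _ => by
          simp [LinearMap.mul'_apply]
    _ = ∑ p ∈ t, Coalgebra.counit (R := k) p.2 • (p.1 ⊗ₜ[k] (1:H)) := by
        refine Finset.sum_congr rfl fun p _ => ?_
        rw [HopfAlgebra.mul_antipode_rTensor_comul_apply, Algebra.algebraMap_eq_smul_one,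
          TensorProduct.tmul_smul]
    _ = (∑ p ∈ t, Coalgebra.counit (R := k) p.2 • p.1) ⊗ₜ[k] (1:H) := by
        rw [TensorProduct.sum_tmul]
        exact Finset.sum_congr rfl fun p _ => by
          rw [TensorProduct.smul_tmul, TensorProduct.tmul_smul]
    _ = m ⊗ₜ[k] (1:H) := by rw [comodule_counit_smul ρ hM m t ht]
        
/-- `∑ m₍₀₎ ⊗ (m₍₁₎ S(m₍₂₎) ⊗ m₍₃₎) = ∑ m₍₀₎ ⊗ (1 ⊗ m₍₁₎)`. -/
lemma comodule_antipode_cancel' (m : M) (t : Finset (M × H))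
    (ht : ρ m = ∑ p ∈ t, p.1 ⊗ₜ[k] p.2)
    (u : (M × H) → Finset (M × H))
    (hu : ∀ p ∈ t, ρ p.1 = ∑ q ∈ u p, q.1 ⊗ₜ[k] q.2)
    (rs : ∀ p : M × H, Coalgebra.Repr k p.2 (H × H)) :
    ∑ p ∈ t, ∑ q ∈ u p, ∑ v ∈ (rs p).index,
        q.1 ⊗ₜ[k] ((q.2 * HopfAlgebra.antipode (R := k) ((rs p).left v)) ⊗ₜ[k] (rs p).right v)
      = ∑ p ∈ t, p.1 ⊗ₜ[k] ((1 : H) ⊗ₜ[k] p.2) := by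
  have A1 := comodule_coassoc ρ hM m t ht u hu
  set T := ((TensorProduct.map ((LinearMap.mul' k H) ∘ₗ
        ((HopfAlgebra.antipode (R := k)).lTensor H)) LinearMap.id) ∘ₗ
      (TensorProduct.assoc k H H H).symm.toLinearMap) with hT
  have hTapp : ∀ (b x y : H), T (b ⊗ₜ[k] (x ⊗ₜ[k] y))
      = (b * HopfAlgebra.antipode (R := k) x) ⊗ₜ[k] y := by
    intro b x y; simp [hT, LinearMap.mul'_apply]
  have := congrArg (TensorProduct.map (LinearMap.id (R := k) (M := M))
    (T ∘ₗ (Coalgebra.comul (R := k)).lTensor H)) A1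
  simp only [map_sum, TensorProduct.map_tmul, LinearMap.id_apply, LinearMap.comp_apply] at this
  calc ∑ p ∈ t, ∑ q ∈ u p, ∑ v ∈ (rs p).index,
        q.1 ⊗ₜ[k] ((q.2 * HopfAlgebra.antipode (R := k) ((rs p).left v)) ⊗ₜ[k] (rs p).right v)
      = ∑ p ∈ t, ∑ q ∈ u p,
          q.1 ⊗ₜ[k] (T ((Coalgebra.comul (R := k)).lTensor H (q.2 ⊗ₜ[k] p.2))) := by
        refine Finset.sum_congr rfl fun p _ => Finset.sum_congr rfl fun q _ => ?_
        rw [LinearMap.lTensor_tmul, ← (rs p).eq, TensorProduct.tmul_sum, map_sum,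
          TensorProduct.tmul_sum]
        exact Finset.sum_congr rfl fun v _ => by rw [hTapp]
    _ = ∑ p ∈ t, p.1 ⊗ₜ[k]
          (T ((Coalgebra.comul (R := k)).lTensor H (Coalgebra.comul (R := k) p.2))) := this
    _ = ∑ p ∈ t, p.1 ⊗ₜ[k] ((1 : H) ⊗ₜ[k] p.2) := by
        exact Finset.sum_congr rfl fun p _ => by rw [H1]

end Comodule

section Maps
variable {k H}
variable {M : Type w} [AddCommGroup M] [Module k M]

lemma freeContra_eq {B : Type*} [AddCommGroup B] [Module k B] (Φ : H →ₗ[k] (H →ₗ[k] B)) :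
    freeContra k H B Φ = (TensorProduct.lift Φ.flip) ∘ₗ Coalgebra.comul := by
  ext h
  obtain r := Coalgebra.Repr.arbitrary k h
  rw [freeContra_apply k H B Φ h r]
  simp only [LinearMap.comp_apply, ← r.eq, map_sum]
  simp

/-- `α(φ)(h)(m) = ∑ φ(m₍₀₎)(S(m₍₁₎) h)`. -/
def alphaMap {B : Type*} [AddCommGroup B] [Module k B] (ρ : M →ₗ[k] M ⊗[k] H) :
    (M →ₗ[k] (H →ₗ[k] B)) →ₗ[k] (H →ₗ[k] (M →ₗ[k] B)) :=
  LinearMap.lflip.toLinearMap ∘ₗ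
  (LinearMap.lcomp k (H →ₗ[k] B) ρ) ∘ₗ
  (TensorProduct.uncurry (RingHom.id k) M H (H →ₗ[k] B)) ∘ₗ
  (LinearMap.llcomp k M (H →ₗ[k] B) (H →ₗ[k] (H →ₗ[k] B))
    ((LinearMap.lcomp k (H →ₗ[k] B)
        ((LinearMap.mul k H) ∘ₗ (HopfAlgebra.antipode (R := k)))) ∘ₗ
      (LinearMap.llcomp k H H B)))

lemma alphaMap_apply {B : Type*} [AddCommGroup B] [Module k B] (ρ : M →ₗ[k] M ⊗[k] H)
    (φ : M →ₗ[k] (H →ₗ[k] B)) (h : H) (m : M) (t : Finset (M × H))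
    (ht : ρ m = ∑ p ∈ t, p.1 ⊗ₜ[k] p.2) :
    alphaMap ρ φ h m = ∑ p ∈ t, φ p.1 (HopfAlgebra.antipode (R := k) p.2 * h) := by
  simp only [alphaMap, LinearMap.comp_apply, LinearEquiv.coe_coe, LinearMap.lflip_apply,
    LinearMap.flip_apply, LinearMap.lcomp_apply, LinearMap.llcomp_apply]
  rw [ht, map_sum]
  simp [LinearMap.mul_apply']

lemma contraHom_comp {B C D : Type*} [AddCommGroup B] [Module k B] [AddCommGroup C] [Module k C]
    [AddCommGroup D] [Module k D]
    (θB : (H →ₗ[k] B) →ₗ[k] B) (θC : (H →ₗ[k] C) →ₗ[k] C) (θD : (H →ₗ[k] D) →ₗ[k] D)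
    (f : B →ₗ[k] C) (g : C →ₗ[k] D)
    (hf : IsContraHom k H θB θC f) (hg : IsContraHom k H θC θD g) :
    IsContraHom k H θB θD (g ∘ₗ f) := by
  intro φ
  rw [LinearMap.comp_apply, hf φ, hg (f ∘ₗ φ), LinearMap.comp_assoc]

lemma postcomp_free_contraHom {V W : Type*} [AddCommGroup V] [Module k V]
    [AddCommGroup W] [Module k W] (e : V →ₗ[k] W) :
    IsContraHom k H (freeContra k H V) (freeContra k H W)
      (LinearMap.llcomp k H V W e) := by
  intro φ
  ext h
  obtain r := Coalgebra.Repr.arbitrary k h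
  have h1 : (LinearMap.llcomp k H V W e) (freeContra k H V φ) h
      = e (freeContra k H V φ h) := rfl
  rw [h1, freeContra_apply k H V φ h r, freeContra_apply k H W _ h r, map_sum]
  simp

lemma postcomp_diag_contraHom {B D : Type*} [AddCommGroup B] [Module k B]
    [AddCommGroup D] [Module k D] (ρ : M →ₗ[k] M ⊗[k] H)
    (θB : (H →ₗ[k] B) →ₗ[k] B) (θD : (H →ₗ[k] D) →ₗ[k] D)
    (f : B →ₗ[k] D) (hf : IsContraHom k H θB θD f) :
    IsContraHom k H (diagContra k H ρ θB) (diagContra k H ρ θD)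
      (LinearMap.llcomp k M B D f) := by
  intro φ
  ext m
  obtain ⟨t, ht⟩ := TensorProduct.exists_finset (ρ m)
  have h1 : (LinearMap.llcomp k M B D f) ((diagContra k H ρ θB) φ) m
      = f ((diagContra k H ρ θB) φ m) := rfl
  rw [h1, diagContra_apply k H ρ θB φ m t Prod.fst Prod.snd ht.symm, hf,
    diagContra_apply k H ρ θD _ m t Prod.fst Prod.snd ht.symm]
  congr 1
  ext b
  simp

end Maps

section BigLemmas
variable {k H}
variable {M : Type w} [AddCommGroup M] [Module k M]
variable {P : Type x} [AddCommGroup P] [Module k P]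

/-- `(c, c') ↦ φ(x c)(y c')(m'')` as a bilinear map. -/
def quadMap (φ : H →ₗ[k] (H →ₗ[k] (M →ₗ[k] P))) (x y : H) (m'' : M) :
    H →ₗ[k] (H →ₗ[k] P) :=
  LinearMap.mk₂ k (fun c c' => φ (x * c) (y * c') m'')
    (fun c₁ c₂ c' => by simp [mul_add])
    (fun a c c' => by simp [mul_smul_comm])
    (fun c c₁ c₂ => by simp [mul_add])
    (fun a c c' => by simp [mul_smul_comm])

/-- `m' ⊗ (x ⊗ y) ↦ φ(y c₂)(x c₁)(m')`. -/
def thetaMap (φ : H →ₗ[k] (H →ₗ[k] (M →ₗ[k] P))) (c₁ c₂ : H) :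
    M ⊗[k] (H ⊗[k] H) →ₗ[k] P :=
  TensorProduct.lift ((TensorProduct.lift (LinearMap.mk₂ k
    (fun x y => φ (y * c₂) (x * c₁))
    (fun x₁ x₂ y => by simp [add_mul])
    (fun a x y => by simp [smul_mul_assoc])
    (fun x y₁ y₂ => by simp [add_mul])
    (fun a x y => by simp [smul_mul_assoc]))).flip)

lemma thetaMap_apply (φ : H →ₗ[k] (H →ₗ[k] (M →ₗ[k] P))) (c₁ c₂ : H)
    (m' : M) (x y : H) :
    thetaMap φ c₁ c₂ (m' ⊗ₜ[k] (x ⊗ₜ[k] y)) = φ (y * c₂) (x * c₁) m' := by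
  simp [thetaMap]

lemma diag_self_contraHom (ρ : M →ₗ[k] M ⊗[k] H) (hM : IsComodule k H ρ)
    (θP : (H →ₗ[k] P) →ₗ[k] P) (hP : IsContramodule k H θP) :
    IsContraHom k H (freeContra k H (M →ₗ[k] P)) (diagContra k H ρ θP)
      (diagContra k H ρ θP) := by
  intro φ
  ext m
  obtain ⟨t, ht⟩ := TensorProduct.exists_finset (ρ m)
  set u : (M × H) → Finset (M × H) :=
    fun p => (TensorProduct.exists_finset (ρ p.1)).choose with hu_def
  have hu : ∀ p : M × H, ρ p.1 = ∑ q ∈ u p, q.1 ⊗ₜ[k] q.2 :=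
    fun p => (TensorProduct.exists_finset (ρ p.1)).choose_spec
  set Ψ₄ : H →ₗ[k] (H →ₗ[k] P) :=
    ∑ p ∈ t, ∑ q ∈ u p, quadMap φ p.2 q.2 q.1 with hΨ₄
  rw [
    diagContra_apply k H ρ θP (freeContra k H (M →ₗ[k] P) φ) m t Prod.fst Prod.snd ht.symm,
    diagContra_apply k H ρ θP ((diagContra k H ρ θP) ∘ₗ φ) m t Prod.fst Prod.snd ht.symm]
  have hΨ₂ : ∑ p ∈ t, (((diagContra k H ρ θP) ∘ₗ φ) ∘ₗ LinearMap.mulLeft k p.2).flip p.1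
      = θP ∘ₗ Ψ₄ := by
    ext c
    have lhs_eval : (∑ p ∈ t,
        (((diagContra k H ρ θP) ∘ₗ φ) ∘ₗ LinearMap.mulLeft k p.2).flip p.1) c
        = ∑ p ∈ t, (diagContra k H ρ θP) (φ (p.2 * c)) p.1 := by
      simp
    rw [lhs_eval]
    have step : ∀ p ∈ t, (diagContra k H ρ θP) (φ (p.2 * c)) p.1
        = θP (∑ q ∈ u p, quadMap φ p.2 q.2 q.1 c) := by
      intro p _
      rw [diagContra_apply k H ρ θP (φ (p.2 * c)) p.1 (u p) Prod.fst Prod.snd (hu p).symm]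
      congr 1
    rw [Finset.sum_congr rfl step, ← map_sum]
    have : (∑ p ∈ t, ∑ q ∈ u p, quadMap φ p.2 q.2 q.1 c) = Ψ₄ c := by
      rw [hΨ₄]
      simp
    rw [this]
    rfl
  rw [hΨ₂, hP.1 Ψ₄]
  congr 1
  -- Ψ₁ = lift Ψ₄.flip ∘ₗ comul
  ext c
  obtain rc := Coalgebra.Repr.arbitrary k c
  have rhs_eval : (TensorProduct.lift Ψ₄.flip ∘ₗ Coalgebra.comul) c
      = ∑ w ∈ rc.index, ∑ p ∈ t, ∑ q ∈ u p,
          φ (p.2 * rc.right w) (q.2 * rc.left w) q.1 := by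
    rw [LinearMap.comp_apply, ← rc.eq, map_sum]
    refine Finset.sum_congr rfl fun w _ => ?_
    rw [TensorProduct.lift.tmul, LinearMap.flip_apply, hΨ₄]
    simp [quadMap]
  rw [rhs_eval]
  have lhs_eval : (∑ p ∈ t,
      ((freeContra k H (M →ₗ[k] P) φ ∘ₗ LinearMap.mulLeft k p.2)).flip p.1) c
      = ∑ p ∈ t, ∑ w ∈ rc.index, ∑ v ∈ (Coalgebra.Repr.arbitrary k p.2).index,
          φ ((Coalgebra.Repr.arbitrary k p.2).right v * rc.right w)
            ((Coalgebra.Repr.arbitrary k p.2).left v * rc.left w) p.1 := by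
    simp only [LinearMap.sum_apply, LinearMap.flip_apply, LinearMap.comp_apply,
      LinearMap.mulLeft_apply]
    refine Finset.sum_congr rfl fun p _ => ?_
    rw [freeContra_apply k H (M →ₗ[k] P) φ (p.2 * c)
      (mulRepr p.2 c (Coalgebra.Repr.arbitrary k p.2) rc)]
    rw [LinearMap.sum_apply]
    simp only [mulRepr]
    rw [Finset.sum_product, Finset.sum_comm]
  rw [lhs_eval, Finset.sum_comm]
  refine Finset.sum_congr rfl fun w _ => ?_
  have key := comodule_coassoc ρ hM m t ht u (fun p _ => hu p)
  have := congrArg (thetaMap φ (rc.left w) (rc.right w)) key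
  simp only [map_sum] at this
  calc ∑ p ∈ t, ∑ v ∈ (Coalgebra.Repr.arbitrary k p.2).index,
        φ ((Coalgebra.Repr.arbitrary k p.2).right v * rc.right w)
          ((Coalgebra.Repr.arbitrary k p.2).left v * rc.left w) p.1
      = ∑ p ∈ t, thetaMap φ (rc.left w) (rc.right w)
          (p.1 ⊗ₜ[k] Coalgebra.comul (R := k) p.2) := by
        refine Finset.sum_congr rfl fun p _ => ?_
        rw [← (Coalgebra.Repr.arbitrary k p.2).eq, TensorProduct.tmul_sum, map_sum]
        exact Finset.sum_congr rfl fun v _ => (thetaMap_apply _ _ _ _ _ _).symm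
    _ = ∑ p ∈ t, ∑ q ∈ u p, thetaMap φ (rc.left w) (rc.right w)
          (q.1 ⊗ₜ[k] (q.2 ⊗ₜ[k] p.2)) := this.symm
    _ = ∑ p ∈ t, ∑ q ∈ u p, φ (p.2 * rc.right w) (q.2 * rc.left w) q.1 := by
        exact Finset.sum_congr rfl fun p _ => Finset.sum_congr rfl fun q _ =>
          thetaMap_apply _ _ _ _ _ _

end BigLemmas

section BigLemmas2
variable {k H}
variable {M : Type w} [AddCommGroup M] [Module k M]
variable {P : Type x} [AddCommGroup P] [Module k P]

/-- `m' ⊗ (b ⊗ y) ↦ Φ(b c₂)(m')(S(y) c₁)`. -/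
def lamMap (Φ : H →ₗ[k] (M →ₗ[k] (H →ₗ[k] P))) (c₁ c₂ : H) :
    M ⊗[k] (H ⊗[k] H) →ₗ[k] P :=
  TensorProduct.lift ((TensorProduct.lift (LinearMap.mk₂ k
    (fun b y => (Φ (b * c₂)).flip (HopfAlgebra.antipode (R := k) y * c₁))
    (fun b₁ b₂ y => by ext m'; simp [add_mul])
    (fun a b y => by ext m'; simp [smul_mul_assoc])
    (fun b y₁ y₂ => by ext m'; simp [map_add, add_mul])
    (fun a b y => by ext m'; simp [map_smul, smul_mul_assoc]))).flip)

lemma lamMap_apply (Φ : H →ₗ[k] (M →ₗ[k] (H →ₗ[k] P))) (c₁ c₂ : H) (m' : M) (b y : H) :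
    lamMap Φ c₁ c₂ (m' ⊗ₜ[k] (b ⊗ₜ[k] y))
      = Φ (b * c₂) m' (HopfAlgebra.antipode (R := k) y * c₁) := by
  simp [lamMap]

lemma alpha_contraHom (ρ : M →ₗ[k] M ⊗[k] H) (hM : IsComodule k H ρ) :
    IsContraHom k H (diagContra k H ρ (freeContra k H P)) (freeContra k H (M →ₗ[k] P))
      (alphaMap ρ) := by
  intro Φ
  ext h m
  obtain ⟨t, ht⟩ := TensorProduct.exists_finset (ρ m)
  set u : (M × H) → Finset (M × H) :=
    fun p => (TensorProduct.exists_finset (ρ p.1)).choose with hu_def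
  have hu : ∀ p : M × H, ρ p.1 = ∑ q ∈ u p, q.1 ⊗ₜ[k] q.2 :=
    fun p => (TensorProduct.exists_finset (ρ p.1)).choose_spec
  obtain rh := Coalgebra.Repr.arbitrary k h
  set rs : ∀ p : M × H, Coalgebra.Repr k p.2 (H × H) := fun p => Coalgebra.Repr.arbitrary k p.2
    with hrs
  -- right hand side
  have rhs_eval : freeContra k H (M →ₗ[k] P) ((alphaMap ρ) ∘ₗ Φ) h m
      = ∑ w ∈ rh.index, ∑ p ∈ t,
          Φ (rh.right w) p.1 (HopfAlgebra.antipode (R := k) p.2 * rh.left w) := by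
    rw [freeContra_apply k H (M →ₗ[k] P) _ h rh]
    have : ∀ w ∈ rh.index, ((alphaMap ρ ∘ₗ Φ) (rh.right w)) (rh.left w) m
        = ∑ p ∈ t, Φ (rh.right w) p.1 (HopfAlgebra.antipode (R := k) p.2 * rh.left w) := by
      intro w _
      rw [LinearMap.comp_apply, alphaMap_apply ρ (Φ (rh.right w)) (rh.left w) m t ht]
    rw [LinearMap.sum_apply]
    exact Finset.sum_congr rfl this
  rw [rhs_eval, alphaMap_apply ρ ((diagContra k H ρ (freeContra k H P)) Φ) h m t ht]
  -- left hand side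
  have lhs_eval : ∀ p ∈ t,
      (diagContra k H ρ (freeContra k H P)) Φ p.1 (HopfAlgebra.antipode (R := k) p.2 * h)
      = ∑ v ∈ (rs p).index, ∑ w ∈ rh.index, ∑ q ∈ u p,
          Φ (q.2 * (HopfAlgebra.antipode (R := k) ((rs p).left v) * rh.right w)) q.1
            (HopfAlgebra.antipode (R := k) ((rs p).right v) * rh.left w) := by
    intro p _
    rw [diagContra_apply k H ρ (freeContra k H P) Φ p.1 (u p) Prod.fst Prod.snd (hu p).symm]
    rw [freeContra_apply k H P _ (HopfAlgebra.antipode (R := k) p.2 * h)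
      (mulRepr _ h (antipodeRepr p.2 (rs p)) rh)]
    simp only [mulRepr, antipodeRepr]
    rw [Finset.sum_product]
    refine Finset.sum_congr rfl fun v _ => Finset.sum_congr rfl fun w _ => ?_
    rw [LinearMap.sum_apply]
    simp
  rw [Finset.sum_congr rfl lhs_eval]
  have key := comodule_antipode_cancel' ρ hM m t ht u (fun p _ => hu p) rs
  calc ∑ p ∈ t, ∑ v ∈ (rs p).index, ∑ w ∈ rh.index, ∑ q ∈ u p,
        Φ (q.2 * (HopfAlgebra.antipode (R := k) ((rs p).left v) * rh.right w)) q.1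
          (HopfAlgebra.antipode (R := k) ((rs p).right v) * rh.left w)
      = ∑ w ∈ rh.index, ∑ p ∈ t, ∑ v ∈ (rs p).index, ∑ q ∈ u p,
          Φ (q.2 * (HopfAlgebra.antipode (R := k) ((rs p).left v) * rh.right w)) q.1
            (HopfAlgebra.antipode (R := k) ((rs p).right v) * rh.left w) :=
        (Finset.sum_congr rfl fun p _ => Finset.sum_comm).trans Finset.sum_comm
    _ = ∑ w ∈ rh.index, ∑ p ∈ t,
          Φ (rh.right w) p.1 (HopfAlgebra.antipode (R := k) p.2 * rh.left w) := by
        refine Finset.sum_congr rfl fun w _ => ?_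
        have hthis := congrArg (lamMap Φ (rh.left w) (rh.right w)) key
        simp only [map_sum] at hthis
        calc ∑ p ∈ t, ∑ v ∈ (rs p).index, ∑ q ∈ u p,
              Φ (q.2 * (HopfAlgebra.antipode (R := k) ((rs p).left v) * rh.right w)) q.1
                (HopfAlgebra.antipode (R := k) ((rs p).right v) * rh.left w)
            = ∑ p ∈ t, ∑ q ∈ u p, ∑ v ∈ (rs p).index,
                lamMap Φ (rh.left w) (rh.right w)
                  (q.1 ⊗ₜ[k] ((q.2 * HopfAlgebra.antipode (R := k) ((rs p).left v)) ⊗ₜ[k]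
                    (rs p).right v)) := by
              refine Finset.sum_congr rfl fun p _ => ?_
              rw [Finset.sum_comm]
              refine Finset.sum_congr rfl fun q _ => Finset.sum_congr rfl fun v _ => ?_
              rw [lamMap_apply, mul_assoc]
          _ = ∑ p ∈ t, lamMap Φ (rh.left w) (rh.right w) (p.1 ⊗ₜ[k] ((1:H) ⊗ₜ[k] p.2)) := hthis
          _ = ∑ p ∈ t,
                Φ (rh.right w) p.1 (HopfAlgebra.antipode (R := k) p.2 * rh.left w) := by
              refine Finset.sum_congr rfl fun p _ => ?_
              rw [lamMap_apply, one_mul]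

/-- `m' ⊗ x ↦ σ(φ(m'))(x c)`. -/
def xiMap (σ : P →ₗ[k] (H →ₗ[k] P)) (φ : M →ₗ[k] P) (c : H) :
    M ⊗[k] H →ₗ[k] P :=
  TensorProduct.lift (LinearMap.mk₂ k (fun m' x => σ (φ m') (x * c))
    (fun m₁ m₂ x => by simp)
    (fun a m' x => by simp)
    (fun m' x₁ x₂ => by simp [add_mul])
    (fun a m' x => by simp [smul_mul_assoc]))

lemma retract_split (ρ : M →ₗ[k] M ⊗[k] H) (hM : IsComodule k H ρ)
    (θP : (H →ₗ[k] P) →ₗ[k] P) (σ : P →ₗ[k] (H →ₗ[k] P))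
    (hσsplit : θP ∘ₗ σ = LinearMap.id) :
    (diagContra k H ρ θP) ∘ₗ (alphaMap ρ) ∘ₗ (LinearMap.llcomp k M P (H →ₗ[k] P) σ)
      = LinearMap.id := by
  ext φ m
  obtain ⟨t, ht⟩ := TensorProduct.exists_finset (ρ m)
  set u : (M × H) → Finset (M × H) :=
    fun p => (TensorProduct.exists_finset (ρ p.1)).choose with hu_def
  have hu : ∀ p : M × H, ρ p.1 = ∑ q ∈ u p, q.1 ⊗ₜ[k] q.2 :=
    fun p => (TensorProduct.exists_finset (ρ p.1)).choose_spec
  have h0 : ((diagContra k H ρ θP) ∘ₗ (alphaMap ρ) ∘ₗ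
      (LinearMap.llcomp k M P (H →ₗ[k] P) σ)) φ m
      = (diagContra k H ρ θP) (alphaMap ρ (σ ∘ₗ φ)) m := rfl
  rw [h0, diagContra_apply k H ρ θP (alphaMap ρ (σ ∘ₗ φ)) m t Prod.fst Prod.snd ht.symm]
  have hΨ : ∑ p ∈ t, ((alphaMap ρ (σ ∘ₗ φ) ∘ₗ LinearMap.mulLeft k p.2)).flip p.1
      = σ (φ m) := by
    ext c
    have lhs : (∑ p ∈ t, ((alphaMap ρ (σ ∘ₗ φ) ∘ₗ LinearMap.mulLeft k p.2)).flip p.1) c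
        = ∑ p ∈ t, alphaMap ρ (σ ∘ₗ φ) (p.2 * c) p.1 := by simp
    rw [lhs]
    have step : ∀ p ∈ t, alphaMap ρ (σ ∘ₗ φ) (p.2 * c) p.1
        = ∑ q ∈ u p, xiMap σ φ c
            (q.1 ⊗ₜ[k] (HopfAlgebra.antipode (R := k) q.2 * p.2)) := by
      intro p _
      rw [alphaMap_apply ρ (σ ∘ₗ φ) (p.2 * c) p.1 (u p) (hu p)]
      refine Finset.sum_congr rfl fun q _ => ?_
      simp [xiMap, mul_assoc]
    rw [Finset.sum_congr rfl step]
    have key := comodule_antipode_cancel ρ hM m t ht u (fun p _ => hu p)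
    have := congrArg (xiMap σ φ c) key
    simp only [map_sum] at this
    rw [this]
    simp [xiMap]
  rw [hΨ]
  have := congrArg (fun (f : P →ₗ[k] P) => f (φ m)) hσsplit
  simpa using this

end BigLemmas2


theorem hom_into_projective_is_retract_of_free
    (M : Type w) [AddCommGroup M] [Module k M]
    (P : Type x) [AddCommGroup P] [Module k P]
    (ρ : M →ₗ[k] M ⊗[k] H) (hM : IsComodule k H ρ)
    (θP : (H →ₗ[k] P) →ₗ[k] P) (hP : IsContramodule k H θP)
    -- projectivity of `P`: the contra-action splits by a contramodule homomorphism σ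
    (σ : P →ₗ[k] (H →ₗ[k] P))
    (hσ : IsContraHom k H θP (freeContra k H P) σ)
    (hσsplit : θP ∘ₗ σ = LinearMap.id) :
    ∃ (W : Type (max u v w x)) (_ : AddCommGroup W) (_ : Module k W)
      (s : (M →ₗ[k] P) →ₗ[k] (H →ₗ[k] W))
      (p : (H →ₗ[k] W) →ₗ[k] (M →ₗ[k] P)),
      IsContraHom k H (diagContra k H ρ θP) (freeContra k H W) s ∧
      IsContraHom k H (freeContra k H W) (diagContra k H ρ θP) p ∧
      p ∘ₗ s = LinearMap.id := by
  classical
  set W : Type (max u v w x) := ULift.{max u v} (M →ₗ[k] P) with hW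
  set e : W ≃ₗ[k] (M →ₗ[k] P) := ULift.moduleEquiv with he
  set s : (M →ₗ[k] P) →ₗ[k] (H →ₗ[k] W) :=
    (LinearMap.llcomp k H (M →ₗ[k] P) W e.symm.toLinearMap) ∘ₗ
      (alphaMap ρ) ∘ₗ (LinearMap.llcomp k M P (H →ₗ[k] P) σ) with hs_def
  set p : (H →ₗ[k] W) →ₗ[k] (M →ₗ[k] P) :=
    (diagContra k H ρ θP) ∘ₗ (LinearMap.llcomp k H W (M →ₗ[k] P) e.toLinearMap) with hp_def
  refine ⟨W, inferInstance, inferInstance, s, p, ?_, ?_, ?_⟩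
  · -- s is a contramodule homomorphism
    have h1 : IsContraHom k H (diagContra k H ρ θP)
        (diagContra k H ρ (freeContra k H P)) (LinearMap.llcomp k M P (H →ₗ[k] P) σ) :=
      postcomp_diag_contraHom ρ θP (freeContra k H P) σ hσ
    have h2 : IsContraHom k H (diagContra k H ρ θP) (freeContra k H (M →ₗ[k] P))
        ((alphaMap ρ) ∘ₗ (LinearMap.llcomp k M P (H →ₗ[k] P) σ)) :=
      contraHom_comp _ _ _ _ _ h1 (alpha_contraHom ρ hM)
    exact contraHom_comp _ _ _ _ _ h2 (postcomp_free_contraHom e.symm.toLinearMap)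
  · -- p is a contramodule homomorphism
    exact contraHom_comp _ _ _ _ _ (postcomp_free_contraHom e.toLinearMap)
      (diag_self_contraHom ρ hM θP hP)
  · -- p ∘ s = id
    have hps : p ∘ₗ s = (diagContra k H ρ θP) ∘ₗ (alphaMap ρ) ∘ₗ
        (LinearMap.llcomp k M P (H →ₗ[k] P) σ) := by
      ext φ m
      have : (p ∘ₗ s) φ = (diagContra k H ρ θP)
          ((LinearMap.llcomp k H W (M →ₗ[k] P) e.toLinearMap)
            ((LinearMap.llcomp k H (M →ₗ[k] P) W e.symm.toLinearMap)
              ((alphaMap ρ) (σ ∘ₗ φ)))) := rfl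
      rw [this]
      have hc : (LinearMap.llcomp k H W (M →ₗ[k] P) e.toLinearMap)
          ((LinearMap.llcomp k H (M →ₗ[k] P) W e.symm.toLinearMap)
            ((alphaMap ρ) (σ ∘ₗ φ)))
          = (alphaMap ρ) (σ ∘ₗ φ) := by
        ext h'
        simp
      rw [hc]
      rfl
    rw [hps, retract_split ρ hM θP σ hσsplit]

end
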